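/- Let p > 1 and ε > 0, and set C_ε = (1 − (1+ε)^{−1/(p−1)})^{1−p}. Then for all real numbers y and z one has |y+z|^p − |y|^p ≥ (1/(1+ε)) |z|^p − (1 + C_ε/(1+ε)) |y|^p. -/

import Mathlib

private lemma key_ineq (p ε : ℝ) (hp : 1 < p) (hε : 0 < ε)
    (Cε : ℝ) (hCε : Cε = (1 - (1 + ε) ^ (-(1 / (p - 1)))) ^ (1 - p)) :
    ∀ a b : ℝ, 0 ≤ a → 0 ≤ b → (a + b) ^ p ≤ (1 + ε) * a ^ p + Cε * b ^ p := by
  intro a b ha hb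
  set lam : ℝ := (1 + ε) ^ (-(1 / (p - 1))) with hlam
  have h1ε : (1:ℝ) < 1 + ε := by linarith
  have hlampos : 0 < lam := Real.rpow_pos_of_pos (by linarith) _
  have hlamlt : lam < 1 := by
    have : lam < (1 + ε) ^ (0:ℝ) := by
      apply Real.rpow_lt_rpow_left_iff h1ε |>.2
      have hp1 : 0 < p - 1 := by linarith
      have : 0 < 1 / (p - 1) := by positivity
      linarith
    simpa using this
  have h1lam : 0 < 1 - lam := by linarith
  have hconv := (convexOn_rpow hp.le).2 (Set.mem_Ici.2 (by positivity : (0:ℝ) ≤ a / lam))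
    (Set.mem_Ici.2 (by positivity : (0:ℝ) ≤ b / (1 - lam))) hlampos.le h1lam.le (by ring)
  simp only [smul_eq_mul] at hconv
  have hab : lam * (a / lam) + (1 - lam) * (b / (1 - lam)) = a + b := by
    field_simp
  rw [hab] at hconv
  have hL : lam * (a / lam) ^ p = (1 + ε) * a ^ p := by
    rw [Real.div_rpow ha hlampos.le]
    have hlp : lam ^ p ≠ 0 := ne_of_gt (Real.rpow_pos_of_pos hlampos _)
    have hlam1p : lam ^ (1 - p) = 1 + ε := by
      rw [hlam, ← Real.rpow_mul (by linarith : (0:ℝ) ≤ 1 + ε)]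
      have : -(1 / (p - 1)) * (1 - p) = 1 := by
        have hp1 : p - 1 ≠ 0 := by linarith
        field_simp
        ring
      rw [this, Real.rpow_one]
    rw [← hlam1p, Real.rpow_sub hlampos, Real.rpow_one]
    field_simp
  have hR : (1 - lam) * (b / (1 - lam)) ^ p = Cε * b ^ p := by
    rw [Real.div_rpow hb h1lam.le]
    have hlp : (1 - lam) ^ p ≠ 0 := ne_of_gt (Real.rpow_pos_of_pos h1lam _)
    have : Cε = (1 - lam) ^ (1 - p) := hCε
    rw [this, Real.rpow_sub h1lam, Real.rpow_one]
    field_simp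
  calc (a + b) ^ p ≤ lam * (a / lam) ^ p + (1 - lam) * (b / (1 - lam)) ^ p := hconv
    _ = (1 + ε) * a ^ p + Cε * b ^ p := by rw [hL, hR]

/-- For `p > 1`, `ε > 0` and `C_ε = (1 - (1+ε)^(-1/(p-1)))^(1-p)`, one has
`|y+z|^p - |y|^p ≥ (1/(1+ε))|z|^p - (1 + C_ε/(1+ε))|y|^p` for all reals `y, z`. -/
theorem jump_term_power_lower_bound (p ε : ℝ) (hp : 1 < p) (hε : 0 < ε)
    (Cε : ℝ) (hCε : Cε = (1 - (1 + ε) ^ (-(1 / (p - 1)))) ^ (1 - p)) :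
    ∀ y z : ℝ,
      |y + z| ^ p - |y| ^ p ≥ (1 / (1 + ε)) * |z| ^ p - (1 + Cε / (1 + ε)) * |y| ^ p := by
  intro y z
  have h1ε : (0:ℝ) < 1 + ε := by linarith
  have hzle : |z| ≤ |y + z| + |y| := by
    calc |z| = |(y + z) - y| := by ring_nf
    _ ≤ |y + z| + |y| := abs_sub _ _
  have h1 : |z| ^ p ≤ (|y + z| + |y|) ^ p :=
    Real.rpow_le_rpow (abs_nonneg _) hzle (by positivity)
  have key := key_ineq p ε hp hε Cε hCε (|y + z|) (|y|) (abs_nonneg _) (abs_nonneg _)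
  have h2 : |z| ^ p ≤ (1 + ε) * |y + z| ^ p + Cε * |y| ^ p := le_trans h1 key
  have h4 : (1 / (1 + ε)) * ((1 + ε) * |y + z| ^ p + Cε * |y| ^ p)
      = |y + z| ^ p + (Cε / (1 + ε)) * |y| ^ p := by
    field_simp
  have h3 : (1 / (1 + ε)) * |z| ^ p ≤ |y + z| ^ p + (Cε / (1 + ε)) * |y| ^ p := by
    rw [← h4]
    exact mul_le_mul_of_nonneg_left h2 (by positivity)
  have expand : (1 + Cε / (1 + ε)) * |y| ^ p = |y| ^ p + (Cε / (1 + ε)) * |y| ^ p := by ring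
  linarith
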